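/- The set of values of Euler's totient function contains arbitrarily large gaps: for every positive integer N there exists a positive integer a such that no integer in the interval (a, a + N] is a value of Euler's totient function. -/

import Mathlib

open Finset

namespace TotientGap

def A (k y : ℕ) : ℕ := ((Finset.Icc 1 y).filter (fun n => n.primeFactors.card ≤ k)).card

lemma A_le (k y : ℕ) : A k y ≤ y := by
  calc A k y ≤ (Finset.Icc 1 y).card := Finset.card_filter_le _ _
    _ = y := by rw [Nat.card_Icc]; omega

lemma A_zero (y : ℕ) : A 0 y ≤ 1 := by
  apply Finset.card_le_one.mpr
  intro a ha b hb
  simp only [A, Finset.mem_filter, Finset.mem_Icc, Nat.le_zero, Finset.card_eq_zero,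
    Nat.primeFactors_eq_empty] at ha hb
  omega

lemma sum_half_pow_le (E : ℕ) : ∑ e ∈ Finset.Icc 1 E, ((1:ℝ)/2)^e ≤ 1 := by
  have h : Finset.Icc 1 E = Finset.Ico 1 (E+1) := rfl
  rw [h, Finset.sum_Ico_eq_sum_range]
  have : ∀ i ∈ Finset.range (E+1-1), ((1:ℝ)/2)^(1+i) = (1/2) * (1/2)^i := by
    intro i _; rw [pow_add, pow_one]
  rw [Finset.sum_congr rfl this, ← Finset.mul_sum]
  have := sum_geometric_two_le (E+1-1)
  nlinarith

lemma sum_inv_pow_le {p : ℕ} (hp : 2 ≤ p) (E : ℕ) :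
    ∑ e ∈ Finset.Icc 1 E, ((p:ℝ)^e)⁻¹ ≤ 1 := by
  refine le_trans (Finset.sum_le_sum ?_) (sum_half_pow_le E)
  intro e _
  rw [one_div, ← inv_pow]
  apply pow_le_pow_left₀ (by positivity)
  rw [inv_le_inv₀ (by exact_mod_cast lt_of_lt_of_le two_pos hp) two_pos]
  exact_mod_cast hp

lemma tail_sum {p : ℕ} (hp : 2 ≤ p) (T E : ℕ) :
    ∑ e ∈ Finset.Icc 1 E, (if p^e ≤ T then 0 else ((p:ℝ)^e)⁻¹) ≤ 2/(T+1) := by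
  have hrw : ∑ e ∈ Finset.Icc 1 E, (if p^e ≤ T then 0 else ((p:ℝ)^e)⁻¹)
      = ∑ e ∈ (Finset.Icc 1 E).filter (fun e => ¬ p^e ≤ T), ((p:ℝ)^e)⁻¹ := by
    rw [Finset.sum_filter]
    exact Finset.sum_congr rfl (fun e _ => by split <;> simp_all)
  rw [hrw]
  set S := (Finset.Icc 1 E).filter (fun e => ¬ p^e ≤ T) with hS
  rcases S.eq_empty_or_nonempty with h | h
  · rw [h, Finset.sum_empty]; positivity
  · set e1 := S.min' h with he1def
    have he1 : e1 ∈ S := S.min'_mem h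
    have he1T : T < p ^ e1 := by simp only [hS, Finset.mem_filter] at he1; omega
    have hbound : ∀ e ∈ S, ((p:ℝ)^e)⁻¹ ≤ ((T:ℝ)+1)⁻¹ * (1/2)^(e - e1) := by
      intro e he
      have hee1 : e1 ≤ e := S.min'_le e he
      have hnat : (T+1) * 2^(e - e1) ≤ p ^ e := by
        calc (T+1) * 2^(e-e1) ≤ p^e1 * p^(e-e1) := by
              apply Nat.mul_le_mul he1T (Nat.pow_le_pow_left hp _)
          _ = p ^ e := by rw [← pow_add]; congr 1; omega
      have hcast : ((T:ℝ)+1) * 2^(e-e1) ≤ (p:ℝ)^e := by exact_mod_cast hnat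
      calc ((p:ℝ)^e)⁻¹ ≤ (((T:ℝ)+1) * 2^(e-e1))⁻¹ := by
            rw [inv_le_inv₀ (by positivity) (by positivity)]
            exact hcast
        _ = ((T:ℝ)+1)⁻¹ * (1/2)^(e - e1) := by
            rw [mul_inv]; congr 1; rw [← inv_pow]; norm_num
    calc ∑ e ∈ S, ((p:ℝ)^e)⁻¹ ≤ ∑ e ∈ S, ((T:ℝ)+1)⁻¹ * (1/2)^(e - e1) :=
          Finset.sum_le_sum hbound
      _ = ((T:ℝ)+1)⁻¹ * ∑ e ∈ S, (1/2:ℝ)^(e - e1) := by rw [Finset.mul_sum]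
      _ ≤ ((T:ℝ)+1)⁻¹ * 2 := by
          gcongr
          have hinj : ∑ e ∈ S, (1/2:ℝ)^(e - e1) = ∑ j ∈ S.image (· - e1), (1/2:ℝ)^j := by
            rw [Finset.sum_image]
            intro a ha b hb hab
            simp only [he1def] at hab
            have := S.min'_le a ha; have := S.min'_le b hb
            omega
          rw [hinj]
          refine le_trans (Finset.sum_le_sum_of_subset_of_nonneg ?_ (by intros; positivity))
            (sum_geometric_two_le (E+1))
          intro j hj
          simp only [Finset.mem_image] at hj
          obtain ⟨e, he, rfl⟩ := hj
          simp only [hS, Finset.mem_filter, Finset.mem_Icc] at he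
          simp only [Finset.mem_range]; omega
      _ = 2/((T:ℝ)+1) := by ring
  -- note: goal has (↑T + 1); fine

lemma fiber_card_le {p : ℕ} (hp : p.Prime) {e : ℕ} (he : 1 ≤ e) (k y : ℕ) :
    ((Finset.Icc 1 y).filter
        (fun n => n.primeFactors.card ≤ k + 1 ∧ n.factorization p = e)).card
      ≤ A k (y / p ^ e) := by
  apply Finset.card_le_card_of_injOn (fun n => n / p ^ e)
  · intro n hn
    simp only [Finset.mem_coe, Finset.mem_filter, Finset.mem_Icc] at hn
    obtain ⟨⟨hn1, hny⟩, hcard, hfac⟩ := hn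
    have hn0 : n ≠ 0 := by omega
    have hoc : n / p ^ e = ordCompl[p] n := by rw [hfac]
    simp only [A, Finset.mem_coe, Finset.mem_filter, Finset.mem_Icc]
    refine ⟨⟨?_, Nat.div_le_div_right hny⟩, ?_⟩
    · rw [hoc]; exact Nat.ordCompl_pos p hn0
    · have hmem : p ∈ n.primeFactors := by
        rw [← Nat.support_factorization, Finsupp.mem_support_iff, hfac]; omega
      have : (n / p ^ e).primeFactors = n.primeFactors.erase p := by
        rw [hoc, ← Nat.support_factorization, Nat.factorization_ordCompl,
          Finsupp.support_erase, Nat.support_factorization]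
      rw [this, Finset.card_erase_of_mem hmem]
      omega
  · intro a ha b hb hab
    simp only [Finset.coe_filter, Set.mem_setOf_eq, Finset.mem_Icc] at ha hb
    obtain ⟨⟨ha1, hay⟩, hacard, hafac⟩ := ha
    obtain ⟨⟨hb1, hby⟩, hbcard, hbfac⟩ := hb
    have h1 : p ^ e * (a / p ^ e) = a := by
      conv_rhs => rw [← Nat.ordProj_mul_ordCompl_eq_self a p]
      rw [hafac]
    have h2 : p ^ e * (b / p ^ e) = b := by
      conv_rhs => rw [← Nat.ordProj_mul_ordCompl_eq_self b p]
      rw [hbfac]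
    rw [← h1, ← h2]
    exact congrArg (HMul.hMul (p ^ e)) hab

lemma A_succ_le (k y : ℕ) (s : Finset ℕ) (hs : ∀ p ∈ s, p.Prime) :
    A (k + 1) y ≤ (∏ p ∈ s, p).totient * (y / (∏ p ∈ s, p) + 1)
      + ∑ p ∈ s, ∑ e ∈ Finset.Icc 1 (Nat.log 2 y), A k (y / p ^ e) := by
  set P := ∏ p ∈ s, p with hPdef
  have hP : 0 < P := Finset.prod_pos (fun p hp => (hs p hp).pos)
  set X := (Finset.Icc 1 y).filter (fun n => n.primeFactors.card ≤ k + 1) with hX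
  show X.card ≤ _
  have hsplit : X.card =
      (X.filter (fun n => P.Coprime n)).card + (X.filter (fun n => ¬ P.Coprime n)).card := by
    rw [Finset.card_filter_add_card_filter_not]
  rw [hsplit]
  gcongr
  · -- coprime part
    calc (X.filter (fun n => P.Coprime n)).card
        ≤ ((Finset.Ico 1 (1 + y)).filter (fun n => P.Coprime n)).card := by
          apply Finset.card_le_card
          apply Finset.filter_subset_filter
          intro n hn
          simp only [hX, Finset.mem_filter, Finset.mem_Icc] at hn
          simp only [Finset.mem_Ico]; omega
      _ ≤ P.totient * (y / P + 1) := Nat.Ico_filter_coprime_le 1 y hP.ne'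
  · -- non-coprime part
    calc (X.filter (fun n => ¬ P.Coprime n)).card
        ≤ (s.biUnion (fun p => (Finset.Icc 1 (Nat.log 2 y)).biUnion (fun e =>
            (Finset.Icc 1 y).filter
              (fun n => n.primeFactors.card ≤ k + 1 ∧ n.factorization p = e)))).card := by
          apply Finset.card_le_card
          intro n hn
          simp only [hX, Finset.mem_filter, Finset.mem_Icc] at hn
          obtain ⟨⟨⟨hn1, hny⟩, hcard⟩, hncop⟩ := hn
          have hn0 : n ≠ 0 := by omega
          have hy0 : y ≠ 0 := by omega
          obtain ⟨p, hps, hpn⟩ : ∃ p ∈ s, p ∣ n := by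
            by_contra hcon
            push_neg at hcon
            exact hncop (Nat.coprime_prod_left_iff.mpr
              (fun p hp => ((hs p hp).coprime_iff_not_dvd).mpr (hcon p hp)))
          have hp := hs p hps
          have he1 : 1 ≤ n.factorization p := hp.factorization_pos_of_dvd hn0 hpn
          have heE : n.factorization p ≤ Nat.log 2 y := by
            rw [Nat.le_log_iff_pow_le one_lt_two hy0]
            calc 2 ^ n.factorization p ≤ p ^ n.factorization p :=
                  Nat.pow_le_pow_left hp.two_le _
              _ ≤ n := Nat.ordProj_le p hn0
              _ ≤ y := hny
          simp only [Finset.mem_biUnion]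
          exact ⟨p, hps, n.factorization p, Finset.mem_Icc.mpr ⟨he1, heE⟩,
            Finset.mem_filter.mpr ⟨Finset.mem_Icc.mpr ⟨hn1, hny⟩, hcard, rfl⟩⟩
      _ ≤ ∑ p ∈ s, ∑ e ∈ Finset.Icc 1 (Nat.log 2 y), A k (y / p ^ e) := by
          refine le_trans (Finset.card_biUnion_le) (Finset.sum_le_sum (fun p hps => ?_))
          refine le_trans (Finset.card_biUnion_le) (Finset.sum_le_sum (fun e he => ?_))
          exact fiber_card_le (hs p hps) (Finset.mem_Icc.mp he).1 k y

lemma exists_small_totient_primes (ε : ℝ) (hε : 0 < ε) :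
    ∃ s : Finset ℕ, (∀ p ∈ s, p.Prime) ∧
      ((∏ p ∈ s, p).totient : ℝ) ≤ ε * (∏ p ∈ s, p) := by
  -- get a finite set of primes with reciprocal sum at least L
  set L : ℝ := -Real.log ε with hL
  have hdiv := not_summable_one_div_on_primes
  have hnonneg : ∀ n : ℕ, 0 ≤ ({p : ℕ | p.Prime}.indicator (fun n => 1 / (n : ℝ))) n := by
    intro n
    apply Set.indicator_nonneg
    intro x _; positivity
  have htend := (not_summable_iff_tendsto_nat_atTop_of_nonneg hnonneg).mp hdiv
  obtain ⟨M, hM⟩ := (Filter.tendsto_atTop.mp htend L).exists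
  set s : Finset ℕ := (Finset.range M).filter Nat.Prime with hs
  have hsum : L ≤ ∑ p ∈ s, 1 / (p : ℝ) := by
    rw [hs, Finset.sum_filter]
    refine le_trans hM (le_of_eq (Finset.sum_congr rfl (fun n _ => ?_)))
    by_cases h : n.Prime
    · rw [Set.indicator_of_mem (by exact h), if_pos h]
    · rw [Set.indicator_of_notMem (by exact h), if_neg h]
  refine ⟨s, fun p hp => (Finset.mem_filter.mp hp).2, ?_⟩
  have hsp : ∀ p ∈ s, p.Prime := fun p hp => (Finset.mem_filter.mp hp).2
  have hP : 0 < ∏ p ∈ s, p := Finset.prod_pos (fun p hp => (hsp p hp).pos)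
  -- totient formula
  have hpf : (∏ p ∈ s, p).primeFactors = s := Nat.primeFactors_prod hsp
  have hQ : ((∏ p ∈ s, p).totient : ℚ) =
      (∏ p ∈ s, p) * ∏ p ∈ s, (1 - (p : ℚ)⁻¹) := by
    rw [Nat.totient_eq_mul_prod_factors, hpf]
  have hR : ((∏ p ∈ s, p).totient : ℝ) =
      ((∏ p ∈ s, p : ℕ) : ℝ) * ∏ p ∈ s, (1 - (p : ℝ)⁻¹) := by
    have h2 := congrArg (fun q : ℚ => (q : ℝ)) hQ
    push_cast at h2 ⊢
    exact h2
  rw [hR, mul_comm (ε : ℝ) _]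
  apply mul_le_mul_of_nonneg_left _ (by positivity)
  -- ∏ (1 - 1/p) ≤ exp(-∑ 1/p) ≤ exp(-L) = ε
  calc ∏ p ∈ s, (1 - (p : ℝ)⁻¹)
      ≤ ∏ p ∈ s, Real.exp (-(p : ℝ)⁻¹) := by
        apply Finset.prod_le_prod
        · intro p hp
          have h2 : (2 : ℝ) ≤ (p : ℝ) := by exact_mod_cast (hsp p hp).two_le
          have : (p : ℝ)⁻¹ ≤ 1 := by
            rw [inv_le_one_iff₀]; right; linarith
          linarith
        · intro p hp
          have := Real.add_one_le_exp (-(p : ℝ)⁻¹)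
          linarith
    _ = Real.exp (∑ p ∈ s, -(p : ℝ)⁻¹) := (Real.exp_sum s _).symm
    _ ≤ Real.exp (-L) := by
        apply Real.exp_le_exp.mpr
        have : ∑ p ∈ s, -(p:ℝ)⁻¹ = -∑ p ∈ s, 1/(p:ℝ) := by
          rw [← Finset.sum_neg_distrib]
          exact Finset.sum_congr rfl (fun p _ => by rw [one_div])
        rw [this]
        linarith
    _ = ε := by rw [hL, neg_neg, Real.exp_log hε]

lemma A_bound : ∀ k : ℕ, ∀ ε : ℝ, 0 < ε → ∃ C : ℝ, 0 ≤ C ∧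
    ∀ y : ℕ, (A k y : ℝ) ≤ ε * y + C := by
  intro k
  induction k with
  | zero =>
    intro ε hε
    refine ⟨1, zero_le_one, fun y => ?_⟩
    have h1 : (A 0 y : ℝ) ≤ 1 := by exact_mod_cast A_zero y
    have h2 : (0:ℝ) ≤ ε * y := by positivity
    linarith
  | succ k ih =>
    intro ε hε
    obtain ⟨s, hsp, hsmall⟩ := exists_small_totient_primes (ε/4) (by linarith)
    set P : ℕ := ∏ p ∈ s, p with hPdef
    have hP0 : 0 < P := Finset.prod_pos fun p hp => (hsp p hp).pos
    have hP0R : (0:ℝ) < P := by exact_mod_cast hP0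
    set B : ℕ := s.card + 1 with hB
    have hB0 : (0:ℝ) < B := by exact_mod_cast Nat.succ_pos s.card
    obtain ⟨C', hC'0, hC'⟩ := ih (ε/(4*B)) (by positivity)
    set T : ℕ := ⌈8*(B:ℝ)/ε⌉₊ with hT
    have hTge : 8*(B:ℝ)/ε ≤ (T:ℝ) := Nat.le_ceil _
    clear_value T
    clear hT
    set L : ℕ := Nat.log 2 T with hLdef
    refine ⟨ε/4*P + s.card * C' * L, by positivity, fun y => ?_⟩
    set E := Nat.log 2 y with hE
    have hy0 : (0:ℝ) ≤ (y:ℝ) := Nat.cast_nonneg y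
    -- term 1
    have ht1 : ((P.totient * (y / P + 1) : ℕ) : ℝ) ≤ ε/4 * y + ε/4 * P := by
      push_cast
      have hfrac : ((y / P : ℕ):ℝ) + 1 ≤ (y:ℝ)/P + 1 := by
        have := Nat.cast_div_le (m := y) (n := P) (α := ℝ)
        linarith
      calc (P.totient:ℝ) * (((y / P : ℕ):ℝ) + 1) ≤ (ε/4 * P) * ((y:ℝ)/P + 1) := by
            apply mul_le_mul hsmall hfrac (by positivity) (by positivity)
        _ = ε/4 * y + ε/4 * P := by field_simp
    -- per-pair bound
    have hpair : ∀ p ∈ s, ∀ e ∈ Finset.Icc 1 E, (A k (y / p^e) : ℝ) ≤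
        ε/(4*B) * (y:ℝ) * ((p:ℝ)^e)⁻¹ + ((if p^e ≤ T then C' else 0)
          + (if p^e ≤ T then 0 else (y:ℝ) * ((p:ℝ)^e)⁻¹)) := by
      intro p hp e _
      have hp2 : 2 ≤ p := (hsp p hp).two_le
      have hpe0 : (0:ℝ) < (p:ℝ)^e := by positivity
      have hcast : ((y / p^e : ℕ):ℝ) ≤ (y:ℝ) * ((p:ℝ)^e)⁻¹ := by
        have h1 := Nat.cast_div_le (m := y) (n := p^e) (α := ℝ)
        rw [div_eq_mul_inv] at h1
        push_cast at h1
        exact h1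
      by_cases hcase : p^e ≤ T
      · rw [if_pos hcase, if_pos hcase, add_zero]
        have h1 := hC' (y / p^e)
        have h2 : ε/(4*B) * ((y/p^e : ℕ):ℝ) ≤ ε/(4*B) * ((y:ℝ)*((p:ℝ)^e)⁻¹) :=
          mul_le_mul_of_nonneg_left hcast (by positivity)
        calc (A k (y/p^e):ℝ) ≤ ε/(4*B) * ((y/p^e : ℕ):ℝ) + C' := h1
          _ ≤ ε/(4*B) * ((y:ℝ)*((p:ℝ)^e)⁻¹) + C' := by linarith
          _ = ε/(4*B) * (y:ℝ) * ((p:ℝ)^e)⁻¹ + C' := by ring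
      · rw [if_neg hcase, if_neg hcase]
        have h1 : (A k (y/p^e) : ℝ) ≤ ((y/p^e : ℕ):ℝ) := by exact_mod_cast A_le _ _
        have h2 : (0:ℝ) ≤ ε/(4*B)*(y:ℝ)*((p:ℝ)^e)⁻¹ := by positivity
        have h3 : (0:ℝ) ≤ C' := hC'0
        linarith
    -- sum over e, for fixed p
    have hsump : ∀ p ∈ s, ∑ e ∈ Finset.Icc 1 E, (A k (y/p^e) : ℝ) ≤
        ε/(4*B) * y + C' * L + (y:ℝ) * (2/((T:ℝ)+1)) := by
      intro p hp
      have hp2 : 2 ≤ p := (hsp p hp).two_le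
      have hsplit : ∑ e ∈ Finset.Icc 1 E, (A k (y/p^e) : ℝ) ≤
          ε/(4*B) * (y:ℝ) * (∑ e ∈ Finset.Icc 1 E, ((p:ℝ)^e)⁻¹)
          + (∑ e ∈ Finset.Icc 1 E, (if p^e ≤ T then C' else 0))
          + (∑ e ∈ Finset.Icc 1 E, (if p^e ≤ T then 0 else (y:ℝ) * ((p:ℝ)^e)⁻¹)) := by
        rw [Finset.mul_sum]
        rw [← Finset.sum_add_distrib, ← Finset.sum_add_distrib]
        exact Finset.sum_le_sum (fun e he => by
          have := hpair p hp e he; linarith [this])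
      have b1 : ε/(4*B) * (y:ℝ) * (∑ e ∈ Finset.Icc 1 E, ((p:ℝ)^e)⁻¹) ≤ ε/(4*B) * y := by
        have := sum_inv_pow_le hp2 E
        have hnn : (0:ℝ) ≤ ε/(4*B) * y := by positivity
        nlinarith
      have b2 : (∑ e ∈ Finset.Icc 1 E, (if p^e ≤ T then C' else 0)) ≤ C' * L := by
        rw [← Finset.sum_filter]
        rw [Finset.sum_const]
        have hcard : ((Finset.Icc 1 E).filter (fun e => p^e ≤ T)).card ≤ L := by
          have hsub : ((Finset.Icc 1 E).filter (fun e => p^e ≤ T)) ⊆ Finset.Icc 1 L := by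
            intro e he
            simp only [Finset.mem_filter, Finset.mem_Icc] at he
            obtain ⟨⟨he1, _⟩, hpeT⟩ := he
            have hT0 : T ≠ 0 := by
              intro h; rw [h] at hpeT
              have : 0 < p ^ e := Nat.pow_pos (by omega)
              omega
            have h2e : 2^e ≤ T := le_trans (Nat.pow_le_pow_left hp2 e) hpeT
            rw [Finset.mem_Icc]
            exact ⟨he1, (Nat.le_log_iff_pow_le one_lt_two hT0).mpr h2e⟩
          calc _ ≤ (Finset.Icc 1 L).card := Finset.card_le_card hsub
            _ = L := by rw [Nat.card_Icc]; omega
        calc (((Finset.Icc 1 E).filter (fun e => p^e ≤ T)).card) • C'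
            ≤ L • C' := smul_le_smul_of_nonneg_right hcard hC'0
          _ = C' * L := by rw [nsmul_eq_mul]; ring
      have b3 : (∑ e ∈ Finset.Icc 1 E, (if p^e ≤ T then 0 else (y:ℝ) * ((p:ℝ)^e)⁻¹))
          ≤ (y:ℝ) * (2/((T:ℝ)+1)) := by
        have heq : ∀ e ∈ Finset.Icc 1 E, (if p^e ≤ T then (0:ℝ) else (y:ℝ) * ((p:ℝ)^e)⁻¹)
            = (y:ℝ) * (if p^e ≤ T then 0 else ((p:ℝ)^e)⁻¹) := by
          intro e _; split <;> simp
        rw [Finset.sum_congr rfl heq, ← Finset.mul_sum]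
        have := tail_sum hp2 T E
        exact mul_le_mul_of_nonneg_left (by exact_mod_cast this) hy0
      linarith
    -- put it together
    have hscard : (s.card : ℝ) ≤ B := by exact_mod_cast Nat.le_succ s.card
    have hT1 : 8*(B:ℝ)/ε ≤ (T:ℝ)+1 := by linarith
    have hT1pos : (0:ℝ) < (T:ℝ)+1 := by positivity
    have key2 : (s.card:ℝ) * (ε/(4*B)) ≤ ε/4 := by
      have h1 : (s.card:ℝ) * (ε/(4*B)) ≤ (B:ℝ) * (ε/(4*B)) :=
        mul_le_mul_of_nonneg_right hscard (by positivity)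
      have h2 : (B:ℝ) * (ε/(4*B)) = ε/4 := by field_simp
      linarith
    have key3 : (s.card:ℝ) * (2/((T:ℝ)+1)) ≤ ε/4 := by
      have h8 : (0:ℝ) < 8*(B:ℝ)/ε := by positivity
      have h1 : 2/((T:ℝ)+1) ≤ 2/(8*(B:ℝ)/ε) := by
        apply div_le_div_of_nonneg_left (by norm_num) h8 hT1
      have h2 : 2/(8*(B:ℝ)/ε) = ε/(4*B) := by field_simp; ring
      rw [h2] at h1
      calc (s.card:ℝ) * (2/((T:ℝ)+1)) ≤ (s.card:ℝ) * (ε/(4*B)) := by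
            apply mul_le_mul_of_nonneg_left h1 (Nat.cast_nonneg _)
        _ ≤ ε/4 := key2
    have hmain := A_succ_le k y s hsp
    have hmainR : (A (k+1) y : ℝ) ≤ ((P.totient * (y / P + 1) : ℕ) : ℝ)
        + ∑ p ∈ s, ∑ e ∈ Finset.Icc 1 E, (A k (y/p^e) : ℝ) := by
      have : (A (k+1) y : ℝ) ≤ ((P.totient * (y / P + 1)
          + ∑ p ∈ s, ∑ e ∈ Finset.Icc 1 E, A k (y / p ^ e) : ℕ) : ℝ) := by
        exact_mod_cast hmain
      push_cast at this ⊢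
      linarith
    have hsum2 : ∑ p ∈ s, ∑ e ∈ Finset.Icc 1 E, (A k (y/p^e) : ℝ)
        ≤ (s.card : ℝ) * (ε/(4*B) * y + C' * L + (y:ℝ) * (2/((T:ℝ)+1))) := by
      calc ∑ p ∈ s, ∑ e ∈ Finset.Icc 1 E, (A k (y/p^e) : ℝ)
          ≤ ∑ _p ∈ s, (ε/(4*B) * y + C' * L + (y:ℝ) * (2/((T:ℝ)+1))) :=
            Finset.sum_le_sum hsump
        _ = (s.card : ℝ) * (ε/(4*B) * y + C' * L + (y:ℝ) * (2/((T:ℝ)+1))) := by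
            rw [Finset.sum_const, nsmul_eq_mul]
    -- final numeric assembly
    have e2 : (s.card:ℝ) * (ε/(4*B) * y) ≤ ε/4 * y := by
      have := mul_le_mul_of_nonneg_right key2 hy0
      calc (s.card:ℝ) * (ε/(4*B) * y) = (s.card:ℝ) * (ε/(4*B)) * y := by ring
        _ ≤ ε/4 * y := this
    have e3 : (s.card:ℝ) * ((y:ℝ) * (2/((T:ℝ)+1))) ≤ ε/4 * y := by
      have := mul_le_mul_of_nonneg_right key3 hy0
      calc (s.card:ℝ) * ((y:ℝ) * (2/((T:ℝ)+1))) = (s.card:ℝ) * (2/((T:ℝ)+1)) * y := by ring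
        _ ≤ ε/4 * y := this
    have hC'L : (0:ℝ) ≤ (s.card:ℝ) * C' * L := by positivity
    calc (A (k+1) y : ℝ) ≤ ((P.totient * (y / P + 1) : ℕ) : ℝ)
          + ∑ p ∈ s, ∑ e ∈ Finset.Icc 1 E, (A k (y/p^e) : ℝ) := hmainR
      _ ≤ (ε/4 * y + ε/4 * P) + (s.card : ℝ) * (ε/(4*B) * y + C' * L + (y:ℝ) * (2/((T:ℝ)+1))) := by
          linarith [hsum2, ht1]
      _ ≤ ε * y + (ε/4*P + s.card * C' * L) := by
          have expand : (s.card : ℝ) * (ε/(4*B) * y + C' * L + (y:ℝ) * (2/((T:ℝ)+1)))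
              = (s.card:ℝ) * (ε/(4*B) * y) + (s.card:ℝ) * C' * L
                + (s.card:ℝ) * ((y:ℝ) * (2/((T:ℝ)+1))) := by ring
          rw [expand]
          have hey : 0 ≤ ε/4 * y := by positivity
          linarith

lemma two_pow_card_erase_dvd (n : ℕ) (hn : n ≠ 0) :
    2 ^ ((n.primeFactors.erase 2).card) ∣ n.totient := by
  rw [Nat.totient_eq_prod_factorization hn]
  have hrw : n.factorization.prod (fun p k => p ^ (k - 1) * (p - 1))
      = ∏ p ∈ n.primeFactors, p ^ (n.factorization p - 1) * (p - 1) := by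
    rw [Finsupp.prod, Nat.support_factorization]
  rw [hrw]
  calc 2 ^ ((n.primeFactors.erase 2).card)
      = ∏ _p ∈ n.primeFactors.erase 2, 2 := (Finset.prod_const 2).symm
    _ ∣ ∏ p ∈ n.primeFactors.erase 2, p ^ (n.factorization p - 1) * (p - 1) := by
        apply Finset.prod_dvd_prod_of_dvd
        intro p hp
        have hp2 : p ≠ 2 := Finset.ne_of_mem_erase hp
        have hpp : p.Prime := Nat.prime_of_mem_primeFactors (Finset.mem_of_mem_erase hp)
        have hodd : p % 2 = 1 := Nat.odd_iff.mp (hpp.odd_of_ne_two hp2)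
        exact Dvd.dvd.mul_left (by omega) _
    _ ∣ ∏ p ∈ n.primeFactors, p ^ (n.factorization p - 1) * (p - 1) :=
        Finset.prod_dvd_prod_of_subset _ _ _ (Finset.erase_subset _ _)

lemma le_two_pow_mul_totient (n : ℕ) (hn : n ≠ 0) :
    n ≤ 2 ^ n.primeFactors.card * n.totient := by
  conv_lhs => rw [← Nat.factorization_prod_pow_eq_self hn]
  rw [Nat.totient_eq_prod_factorization hn, Finsupp.prod, Finsupp.prod,
    Nat.support_factorization, ← Finset.prod_const 2, ← Finset.prod_mul_distrib]
  apply Finset.prod_le_prod'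
  intro p hp
  have hpp : p.Prime := Nat.prime_of_mem_primeFactors hp
  have hk : 1 ≤ n.factorization p := by
    rw [← Nat.support_factorization] at hp
    have := Finsupp.mem_support_iff.mp hp
    omega
  have h2 : 2 ≤ p := hpp.two_le
  calc p ^ n.factorization p = p ^ (n.factorization p - 1) * p := by
        rw [← pow_succ]; congr 1; omega
    _ ≤ p ^ (n.factorization p - 1) * (2 * (p - 1)) := by
        apply Nat.mul_le_mul_left; omega
    _ = 2 * (p ^ (n.factorization p - 1) * (p - 1)) := by ring

open scoped Classical in
noncomputable def V (x : ℕ) : Finset ℕ :=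
  (Finset.Icc 1 x).filter (fun m => ∃ n : ℕ, 1 ≤ n ∧ Nat.totient n = m)

lemma card_V_le (k x : ℕ) : (V x).card ≤ x / 2^k + A k (2^k * x) := by
  classical
  have hsplit := Finset.card_filter_add_card_filter_not
    (s := V x) (p := fun m => 2^k ∣ m)
  have h1 : ((V x).filter (fun m => 2^k ∣ m)).card ≤ x / 2^k := by
    rw [← Nat.Ioc_filter_dvd_card_eq_div x (2^k)]
    apply Finset.card_le_card
    intro m hm
    simp only [Finset.mem_filter, V, Finset.mem_Icc, Finset.mem_Ioc] at hm ⊢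
    obtain ⟨⟨⟨hm1, hmx⟩, -⟩, hd⟩ := hm
    exact ⟨⟨by omega, hmx⟩, hd⟩
  have h2 : ((V x).filter (fun m => ¬ 2^k ∣ m)).card ≤ A k (2^k * x) := by
    have hex : ∀ m ∈ (V x).filter (fun m => ¬ 2^k ∣ m),
        ∃ n : ℕ, 1 ≤ n ∧ Nat.totient n = m := by
      intro m hm
      simp only [Finset.mem_filter, V, Finset.mem_Icc] at hm
      exact hm.1.2
    apply Finset.card_le_card_of_injOn (fun m =>
      if h : ∃ n : ℕ, 1 ≤ n ∧ Nat.totient n = m then Classical.choose h else 0)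
    · intro m hm
      obtain ⟨hmV, hmdvd⟩ := Finset.mem_filter.mp hm
      have hx := hex m hm
      simp only [dif_pos hx]
      set n := Classical.choose hx with hn
      obtain ⟨hn1, hnφ⟩ := Classical.choose_spec hx
      have hn0 : n ≠ 0 := by omega
      simp only [V, Finset.mem_filter, Finset.mem_Icc] at hmV
      obtain ⟨⟨hm1, hmx⟩, -⟩ := hmV
      have hω : n.primeFactors.card ≤ k := by
        have hdvd := two_pow_card_erase_dvd n hn0
        have hjk : (n.primeFactors.erase 2).card < k := by
          by_contra hge
          push_neg at hge
          exact hmdvd (hnφ ▸ dvd_trans (pow_dvd_pow 2 hge) hdvd)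
        by_cases h2 : 2 ∈ n.primeFactors
        · have := Finset.card_erase_of_mem h2
          have hpos : 0 < n.primeFactors.card := Finset.card_pos.mpr ⟨2, h2⟩
          omega
        · rw [Finset.erase_eq_of_notMem h2] at hjk
          omega
      have hle : n ≤ 2^k * x := by
        calc n ≤ 2 ^ n.primeFactors.card * n.totient := le_two_pow_mul_totient n hn0
          _ ≤ 2^k * m := by
              rw [hnφ]
              exact Nat.mul_le_mul_right _ (Nat.pow_le_pow_right (by omega) hω)
          _ ≤ 2^k * x := Nat.mul_le_mul_left _ hmx
      simp only [A, Finset.mem_coe, Finset.mem_filter, Finset.mem_Icc]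
      exact ⟨⟨hn1, hle⟩, hω⟩
    · intro a ha b hb hab
      have hxa := hex a ha
      have hxb := hex b hb
      simp only [dif_pos hxa, dif_pos hxb] at hab
      have ha2 := (Classical.choose_spec hxa).2
      have hb2 := (Classical.choose_spec hxb).2
      rw [← ha2, ← hb2, hab]
  calc (V x).card = ((V x).filter (fun m => 2^k ∣ m)).card
        + ((V x).filter (fun m => ¬ 2^k ∣ m)).card := hsplit.symm
    _ ≤ x / 2^k + A k (2^k * x) := Nat.add_le_add h1 h2

end TotientGap

/-- The set of values of Euler's totient function contains arbitrarily large gaps: for every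
positive integer `N` there exists a positive integer `a` such that no integer in the interval
`(a, a + N]` is a value of Euler's totient function. -/
theorem totient_values_arbitrarily_large_gaps :
    ∀ N : ℕ, 0 < N → ∃ a : ℕ, 0 < a ∧
      ∀ m : ℕ, a < m → m ≤ a + N → ¬ ∃ n : ℕ, 1 ≤ n ∧ Nat.totient n = m := by
  intro N hN
  by_contra hcon
  push_neg at hcon
  -- choose a totient value in each interval ((t+1)N, (t+1)N + N]
  have hval : ∀ t : ℕ, ∃ m, (t+1)*N < m ∧ m ≤ (t+1)*N + N ∧
      ∃ n : ℕ, 1 ≤ n ∧ Nat.totient n = m := by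
    intro t
    obtain ⟨m, hm1, hm2, hm3⟩ := hcon ((t+1)*N) (Nat.mul_pos (Nat.succ_pos t) hN)
    exact ⟨m, hm1, hm2, hm3⟩
  choose g hg1 hg2 hg3 using hval
  set k : ℕ := N + 1 with hk
  have h2k : 2*N < 2^k := by
    have h1 : N < 2^N := Nat.lt_two_pow_self
    have : 2^k = 2 * 2^N := by rw [hk, pow_succ]; ring
    omega
  obtain ⟨C, hC0, hC⟩ := TotientGap.A_bound k (1/((2^k : ℝ) * (4*N))) (by positivity)
  set K : ℕ := ⌈4*C⌉₊ + 4 with hK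
  set x : ℕ := (K+1)*N with hx
  -- injection from range K into V x
  have hinj : (Finset.range K).card ≤ (TotientGap.V x).card := by
    apply Finset.card_le_card_of_injOn g
    · intro t ht
      simp only [Finset.mem_coe, Finset.mem_range] at ht
      simp only [TotientGap.V, Finset.mem_coe, Finset.mem_filter, Finset.mem_Icc]
      refine ⟨⟨?_, ?_⟩, hg3 t⟩
      · have := hg1 t; have : 0 < (t+1)*N := Nat.mul_pos (Nat.succ_pos t) hN; omega
      · have := hg2 t
        have hle : (t+1)*N + N ≤ (K+1)*N := by
          have : t + 2 ≤ K + 1 := by omega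
          calc (t+1)*N + N = (t+2)*N := by ring
            _ ≤ (K+1)*N := Nat.mul_le_mul_right N this
        omega
    · intro a ha b hb hab
      simp only [Finset.coe_range, Set.mem_Iio] at ha hb
      by_contra hne
      rcases Nat.lt_or_ge a b with h | h
      · have h1 : g a ≤ (a+1)*N + N := hg2 a
        have h2 : (b+1)*N < g b := hg1 b
        have : (a+1)*N + N ≤ (b+1)*N := by
          have : a + 2 ≤ b + 1 := by omega
          calc (a+1)*N + N = (a+2)*N := by ring
            _ ≤ (b+1)*N := Nat.mul_le_mul_right N this
        omega
      · have hba : b < a := by omega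
        have h1 : g b ≤ (b+1)*N + N := hg2 b
        have h2 : (a+1)*N < g a := hg1 a
        have : (b+1)*N + N ≤ (a+1)*N := by
          have : b + 2 ≤ a + 1 := by omega
          calc (b+1)*N + N = (b+2)*N := by ring
            _ ≤ (a+1)*N := Nat.mul_le_mul_right N this
        omega
  have hcardV := TotientGap.card_V_le k x
  -- real estimates
  have hNR : (0:ℝ) < N := by exact_mod_cast hN
  have h2kR : 2*(N:ℝ) ≤ 2^k := by exact_mod_cast Nat.le_of_lt h2k
  have hxR : (x:ℝ) = (K+1)*N := by rw [hx]; push_cast; ring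
  have e1 : ((x / 2^k : ℕ) : ℝ) ≤ (x:ℝ)/(2*N) := by
    calc ((x / 2^k : ℕ) : ℝ) ≤ (x:ℝ)/(2^k : ℝ) := by
          have := Nat.cast_div_le (m := x) (n := 2^k) (α := ℝ)
          push_cast at this ⊢
          exact this
      _ ≤ (x:ℝ)/(2*N) := by
          apply div_le_div_of_nonneg_left (Nat.cast_nonneg x) (by positivity) h2kR
  have e2 : (TotientGap.A k (2^k * x) : ℝ) ≤ (x:ℝ)/(4*N) + C := by
    have := hC (2^k * x)
    have heq : 1/((2^k : ℝ) * (4*N)) * ((2^k * x : ℕ) : ℝ) = (x:ℝ)/(4*N) := by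
      push_cast
      field_simp
    rw [heq] at this
    exact this
  have hKV : (K : ℝ) ≤ ((TotientGap.V x).card : ℝ) := by
    have : (Finset.range K).card = K := Finset.card_range K
    exact_mod_cast this ▸ hinj
  have hVR : ((TotientGap.V x).card : ℝ) ≤ ((x / 2^k : ℕ) : ℝ) + (TotientGap.A k (2^k * x) : ℝ) := by
    exact_mod_cast hcardV
  have hxN : (x:ℝ)/(2*N) + (x:ℝ)/(4*N) = (3/4)*(K+1) := by
    rw [hxR]; field_simp; ring
  have hKC : 4*C + 4 ≤ (K:ℝ) := by
    have := Nat.le_ceil (4*C)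
    have hKR : (K:ℝ) = (⌈4*C⌉₊ : ℝ) + 4 := by rw [hK]; push_cast; ring
    linarith
  linarith
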